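/- Let D₂ < 0, K > 0, r > 0, B > 0, x* = ((-D₂/(2-D₂))·(K/r)/B)^{1/2}, A₂ = (2/(2-D₂))·(K/r)·(x*)^{-D₂}, and v(x) = A₂x^{D₂} + Bx² - K/r. Then v(x) > 0 for all x > x*. -/

import Mathlib

open Real

lemma key_ineq (p t : ℝ) (hp : p < 0) (ht : 1 < t) :
    0 < 2 * t ^ p - p * t ^ (2 : ℕ) - (2 - p) := by
  have ht0 : (0 : ℝ) < t := lt_trans one_pos ht
  have hlog : Real.log t < t - 1 := Real.log_lt_sub_one_of_pos ht0 (by linarith)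
  have hlog0 : 0 < Real.log t := Real.log_pos ht
  have hexp : 1 + p * Real.log t ≤ t ^ p := by
    rw [Real.rpow_def_of_pos ht0]
    rw [mul_comm]
    linarith [Real.add_one_le_exp (Real.log t * p)]
  have hsq : 0 < t ^ (2 : ℕ) - 1 - 2 * Real.log t := by nlinarith [sq_nonneg (t - 1)]
  nlinarith [mul_pos (neg_pos.mpr hp) hsq]

/-- The limit value function `v(x) = A₂x^{D₂} + Bx² - K/r` is strictly positive above the
exit threshold `x*`. -/
theorem value_positive_above_threshold (D₂ K r B : ℝ)
    (hD₂ : D₂ < 0) (hK : 0 < K) (hr : 0 < r) (hB : 0 < B)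
    (xs A₂ : ℝ)
    (hxs : xs = Real.sqrt (-D₂ / (2 - D₂) * (K / r) / B))
    (hA₂ : A₂ = 2 / (2 - D₂) * (K / r) * xs ^ (-D₂))
    (v : ℝ → ℝ)
    (hv : ∀ x > (0 : ℝ), v x = A₂ * x ^ D₂ + B * x ^ (2 : ℕ) - K / r) :
    ∀ x > xs, 0 < v x := by
  have h2 : (0 : ℝ) < 2 - D₂ := by linarith
  have harg : 0 < -D₂ / (2 - D₂) * (K / r) / B := by
    apply div_pos (mul_pos (div_pos (by linarith) h2) (div_pos hK hr)) hB
  have hxs0 : 0 < xs := hxs ▸ Real.sqrt_pos.mpr harg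
  have hxs2 : xs ^ (2 : ℕ) = -D₂ / (2 - D₂) * (K / r) / B := by
    rw [hxs]; exact Real.sq_sqrt harg.le
  intro x hx
  have hx0 : 0 < x := lt_trans hxs0 hx
  set t := x / xs with htdef
  have ht : 1 < t := (one_lt_div hxs0).mpr hx
  have ht0 : 0 < t := lt_trans one_pos ht
  have hxt : x = t * xs := by rw [htdef, div_mul_cancel₀ x hxs0.ne']
  have hone : xs ^ (-D₂) * xs ^ D₂ = 1 := by
    rw [← Real.rpow_add hxs0]; simp
  have hA2x : A₂ * x ^ D₂ = K / r / (2 - D₂) * (2 * t ^ D₂) := by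
    rw [hA₂, hxt, Real.mul_rpow ht0.le hxs0.le]
    linear_combination (2 / (2 - D₂) * (K / r) * t ^ D₂) * hone
  have hxs2' : B * xs ^ (2 : ℕ) = -D₂ / (2 - D₂) * (K / r) := by
    rw [hxs2]; field_simp
  have hBx : B * x ^ (2 : ℕ) = K / r / (2 - D₂) * (-D₂ * t ^ (2 : ℕ)) := by
    rw [hxt]
    linear_combination (t ^ (2 : ℕ)) * hxs2'
  have hvx : v x = K / r / (2 - D₂) * (2 * t ^ D₂ - D₂ * t ^ (2 : ℕ) - (2 - D₂)) := by
    rw [hv x hx0, hA2x, hBx]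
    field_simp
    ring
  rw [hvx]
  exact mul_pos (div_pos (div_pos hK hr) h2) (key_ineq D₂ t hD₂ ht)
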